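/- arXiv:2012.03119 — 4 statements merged into one kernel-verified Lean document; each statement's English description precedes it below -/
import Mathlib

section
/- The converse of the aggregate trigger theorem fails: there exist two assignments A₁, A₂ and a clause C such that C triggers on the associated aggregate assignment but triggers on neither A₁ nor A₂. Concretely, with variables A, B, assignments A₁ = (A ↦ F, B ↦ T), A₂ = (A ↦ T, B ↦ F), and clause A ∨ B, the clause triggers on the aggregate (A ↦ {T,F}, B ↦ {T,F}) but on neither individual assignment. -/
/-- Truth values: True, False, Undef. -/
inductive TV | T | F | U
  deriving DecidableEq, Repr

/-- Negation of a truth value. -/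
def TV.neg : TV → TV
  | .T => .F
  | .F => .T
  | .U => .U

/-- A literal over variable type `V`: a variable or its negation. -/
inductive Lit (V : Type) where
  | pos (v : V)
  | neg (v : V)
  deriving DecidableEq

variable {V : Type}

/-- Evaluation of a literal under an assignment. -/
def Lit.eval (A : V → TV) : Lit V → TV
  | .pos v => A v
  | .neg v => (A v).neg

/-- Evaluation of a literal under an aggregate assignment. -/
def Lit.aeval (G : V → Set TV) : Lit V → Set TV
  | .pos v => G v
  | .neg v => TV.neg '' G v

/-- A clause (list of literals) triggers on an assignment. -/
def triggers (A : V → TV) (C : List (Lit V)) : Prop :=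
  (∀ l ∈ C, l.eval A ≠ TV.T) ∧
    C.length - 1 ≤ C.countP (fun l => decide (l.eval A = TV.F))

open Classical in
/-- A clause triggers on an aggregate assignment. -/
noncomputable def aggTriggers (G : V → Set TV) (C : List (Lit V)) : Prop :=
  (∀ l ∈ C, TV.F ∈ l.aeval G ∨ TV.U ∈ l.aeval G) ∧
    C.length - 1 ≤ C.countP (fun l => decide (TV.F ∈ l.aeval G))

/-- Aggregate assignment associated to a family of assignments. -/
def assocAgg {N : ℕ} (A : Fin N → V → TV) : V → Set TV :=
  fun v => Set.range fun i => A i v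

/-- Aggregate assignment associated to a set of assignments. -/
def setAgg (S : Set (V → TV)) : V → Set TV :=
  fun v => (fun A => A v) '' S

/-- Variables `false` (called `A` in the paper) and `true` (called `B`). -/
def A₁ : Bool → TV := fun v => if v then TV.T else TV.F
def A₂ : Bool → TV := fun v => if v then TV.F else TV.T
/-- The clause `A ∨ B`. -/
def exClause : List (Lit Bool) := [Lit.pos false, Lit.pos true]

theorem aggTriggers_converse_fails :
    aggTriggers (assocAgg ![A₁, A₂]) exClause ∧
      ¬ triggers A₁ exClause ∧ ¬ triggers A₂ exClause := by
  refine ⟨⟨?_, ?_⟩, ?_, ?_⟩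
  · intro l hl
    simp only [exClause, List.mem_cons, List.not_mem_nil, or_false] at hl
    rcases hl with rfl | rfl
    · left; exact ⟨0, rfl⟩
    · left; exact ⟨1, rfl⟩
  · have h1 : TV.F ∈ Lit.aeval (assocAgg ![A₁, A₂]) (Lit.pos false) := ⟨0, rfl⟩
    have h2 : TV.F ∈ Lit.aeval (assocAgg ![A₁, A₂]) (Lit.pos true) := ⟨1, rfl⟩
    simp [exClause, h1, h2]
  · rintro ⟨h, -⟩
    exact h (Lit.pos true) (by simp [exClause]) rfl
  · rintro ⟨h, -⟩
    exact h (Lit.pos false) (by simp [exClause]) rfl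
end

section
/- The bitwise trigger test is correct: given N assignments encoded bitwise (for each literal l, an N-bit word isFalse(l) whose i-th bit indicates Aᵢ(l) = F, and isSet(l) whose i-th bit indicates Aᵢ(l) ≠ U), the word computed by folding over the literals of C via oneUndef' = (allFalse AND NOT isSet(l)) OR (oneUndef AND isFalse(l)), allFalse' = allFalse AND isFalse(l) (starting from allFalse = all-ones, oneUndef = 0), and returning allFalse OR oneUndef, has its i-th bit set if and only if C triggers on Aᵢ. -/
variable {V : Type}

/-- One step of the bitwise trigger fold: state is `(allFalse, oneUndef)`. -/
def bitStep {V : Type} {N : ℕ} (isFalse isSet : Lit V → Fin N → Bool)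
    (p : (Fin N → Bool) × (Fin N → Bool)) (l : Lit V) :
    (Fin N → Bool) × (Fin N → Bool) :=
  (fun i => p.1 i && isFalse l i,
   fun i => (p.1 i && !(isSet l i)) || (p.2 i && isFalse l i))

/-- State of the bitwise trigger algorithm after processing a list of literals. -/
def bitState {V : Type} {N : ℕ} (isFalse isSet : Lit V → Fin N → Bool)
    (C : List (Lit V)) : (Fin N → Bool) × (Fin N → Bool) :=
  C.foldl (bitStep isFalse isSet) (fun _ => true, fun _ => false)

/-- The result of the bitwise trigger algorithm: `allFalse OR oneUndef`. -/
def bitTrigger {V : Type} {N : ℕ} (isFalse isSet : Lit V → Fin N → Bool)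
    (C : List (Lit V)) : Fin N → Bool :=
  fun i => (bitState isFalse isSet C).1 i || (bitState isFalse isSet C).2 i

theorem bitTrigger_correct {V : Type} {N : ℕ} (A : Fin N → V → TV)
    (isFalse isSet : Lit V → Fin N → Bool)
    (hFalse : ∀ l i, isFalse l i = decide (Lit.eval (A i) l = TV.F))
    (hSet : ∀ l i, isSet l i = decide (Lit.eval (A i) l ≠ TV.U))
    (C : List (Lit V)) :
    ∀ i : Fin N, bitTrigger isFalse isSet C i = true ↔ triggers (A i) C := by
  intro i
  have hsum : ∀ D : List (Lit V), (∀ l ∈ D, Lit.eval (A i) l ≠ TV.T) →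
      D.countP (fun l => decide (Lit.eval (A i) l = TV.F)) +
      D.countP (fun l => decide (Lit.eval (A i) l = TV.U)) = D.length := by
    intro D
    induction D with
    | nil => simp
    | cons l D ih =>
      intro h
      have h1 := h l (by simp)
      have h2 : ∀ l ∈ D, Lit.eval (A i) l ≠ TV.T := fun l hl => h l (by simp [hl])
      have := ih h2
      cases hv : Lit.eval (A i) l <;> simp [List.countP_cons, hv, this] <;> first | omega | (exact absurd hv h1)
  have hspec : ((bitState isFalse isSet C).1 i = true ↔ ∀ l ∈ C, Lit.eval (A i) l = TV.F) ∧
      ((bitState isFalse isSet C).2 i = true ↔ ((∀ l ∈ C, Lit.eval (A i) l ≠ TV.T) ∧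
        C.countP (fun l => decide (Lit.eval (A i) l = TV.U)) = 1)) := by
    induction C using List.reverseRecOn with
    | nil => simp [bitState]
    | append_singleton D l ih =>
      obtain ⟨ih1, ih2⟩ := ih
      have hst : bitState isFalse isSet (D ++ [l]) =
          bitStep isFalse isSet (bitState isFalse isSet D) l := by
        simp [bitState, List.foldl_append]
      constructor
      · rw [hst]
        simp only [bitStep, Bool.and_eq_true, ih1, hFalse, decide_eq_true_eq]
        constructor
        · rintro ⟨h1, h2⟩ m hm
          rcases List.mem_append.mp hm with h | h
          · exact h1 m h
          · simpa using (List.mem_singleton.mp h ▸ h2)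
        · intro h
          exact ⟨fun m hm => h m (by simp [hm]), h l (by simp)⟩
      · rw [hst]
        simp only [bitStep, Bool.or_eq_true, Bool.and_eq_true, ih1, ih2,
          Bool.not_eq_true', hFalse, hSet, decide_eq_true_eq, decide_eq_false_iff_not,
          not_not, List.countP_append, List.countP_singleton]
        constructor
        · rintro (⟨h1, h2⟩ | ⟨⟨h1, h2⟩, h3⟩)
          · constructor
            · intro m hm
              rcases List.mem_append.mp hm with h | h
              · rw [h1 m h]; simp
              · rw [List.mem_singleton.mp h, h2]; simp
            · have hD0 : D.countP (fun l => decide (Lit.eval (A i) l = TV.U)) = 0 := by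
                rw [List.countP_eq_zero]
                intro m hm
                simp [h1 m hm]
              simp [hD0, h2]
          · constructor
            · intro m hm
              rcases List.mem_append.mp hm with h | h
              · exact h1 m h
              · rw [List.mem_singleton.mp h, h3]; simp
            · simp [h2, h3]
        · rintro ⟨h1, h2⟩
          have hnl : Lit.eval (A i) l ≠ TV.T := h1 l (by simp)
          have hnD : ∀ m ∈ D, Lit.eval (A i) m ≠ TV.T := fun m hm => h1 m (by simp [hm])
          cases hv : Lit.eval (A i) l with
          | T => exact absurd hv hnl
          | F =>
            right
            refine ⟨⟨hnD, ?_⟩, rfl⟩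
            simpa [hv] using h2
          | U =>
            left
            refine ⟨?_, rfl⟩
            have hD0 : D.countP (fun l => decide (Lit.eval (A i) l = TV.U)) = 0 := by
              simpa [hv] using h2
            intro m hm
            have := hsum D hnD
            have hall : D.countP (fun l => decide (Lit.eval (A i) l = TV.F)) = D.length := by omega
            have := List.countP_eq_length.mp hall m hm
            simpa using this
  obtain ⟨h1, h2⟩ := hspec
  simp only [bitTrigger, Bool.or_eq_true, h1, h2, triggers]
  constructor
  · rintro (h | ⟨hne, hU⟩)
    · refine ⟨fun l hl => by simp [h l hl], ?_⟩
      have : C.countP (fun l => decide (Lit.eval (A i) l = TV.F)) = C.length :=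
        List.countP_eq_length.mpr (fun m hm => by simp [h m hm])
      omega
    · have := hsum C hne
      exact ⟨hne, by omega⟩
  · rintro ⟨hne, hle⟩
    have hs := hsum C hne
    by_cases hU : C.countP (fun l => decide (Lit.eval (A i) l = TV.U)) = 0
    · left
      have hall : C.countP (fun l => decide (Lit.eval (A i) l = TV.F)) = C.length := by omega
      intro m hm
      have := List.countP_eq_length.mp hall m hm
      simpa using this
    · right
      exact ⟨hne, by omega⟩
end

section
/- The intermediate invariant of the bitwise trigger algorithm: after processing a prefix P of the literals of clause C, the i-th bit of allFalse equals (Aᵢ(l) = F for all l in P), and the i-th bit of oneUndef equals (exactly one literal l in P has Aᵢ(l) = U and all other literals of P have Aᵢ(l) = F). -/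
variable {V : Type}

theorem bitState_invariant {V : Type} {N : ℕ} (A : Fin N → V → TV)
    (isFalse isSet : Lit V → Fin N → Bool)
    (hFalse : ∀ l i, isFalse l i = decide (Lit.eval (A i) l = TV.F))
    (hSet : ∀ l i, isSet l i = decide (Lit.eval (A i) l ≠ TV.U))
    (C P : List (Lit V)) (hP : P <+: C) :
    ∀ i : Fin N,
      ((bitState isFalse isSet P).1 i = true ↔ ∀ l ∈ P, Lit.eval (A i) l = TV.F) ∧
      ((bitState isFalse isSet P).2 i = true ↔
        ∃ l₀ ∈ P, Lit.eval (A i) l₀ = TV.U ∧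
          P.countP (fun l => decide (Lit.eval (A i) l = TV.U)) = 1 ∧
          ∀ l ∈ P, Lit.eval (A i) l ≠ TV.U → Lit.eval (A i) l = TV.F) := by
  clear hP
  induction P using List.reverseRecOn with
  | nil =>
    intro i
    simp [bitState]
  | append_singleton P x ih =>
    intro i
    obtain ⟨h1, h2⟩ := ih i
    simp only [bitState, List.foldl_append, List.foldl_cons, List.foldl_nil] at h1 h2 ⊢
    rw [show (List.foldl (bitStep isFalse isSet) (fun _ => true, fun _ => false) P) =
      bitState isFalse isSet P from rfl] at *
    simp only [bitStep, hFalse, hSet, Bool.and_eq_true, Bool.or_eq_true, Bool.not_eq_true',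
      decide_eq_true_eq, decide_eq_false_iff_not, not_not]
    constructor
    · rw [h1]
      constructor
      · rintro ⟨hall, hx⟩ l hl
        rcases List.mem_append.1 hl with h | h
        · exact hall l h
        · simp at h; subst h; exact hx
      · intro hall
        exact ⟨fun l hl => hall l (List.mem_append.2 (Or.inl hl)),
          hall x (by simp)⟩
    · rw [h1, h2]
      rcases hx : Lit.eval (A i) x with _ | _ | _
      · -- x evals to T
        simp only [hx, reduceCtorEq, and_false, false_or, and_false]
        constructor
        · exact fun h => h.elim
        · rintro ⟨l₀, hl₀, hU, hc, hrest⟩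
          have := hrest x (by simp) (by simp [hx])
          simp [hx] at this
      · -- x evals to F
        simp only [hx, and_true, reduceCtorEq, and_false, false_or]
        constructor
        · rintro ⟨l₀, hl₀, hU, hc, hrest⟩
          refine ⟨l₀, List.mem_append.2 (Or.inl hl₀), hU, ?_, ?_⟩
          · rw [List.countP_append]; simp [hx, hc]
          · intro l hl hne
            rcases List.mem_append.1 hl with h | h
            · exact hrest l h hne
            · simp at h; subst h; exact hx
        · rintro ⟨l₀, hl₀, hU, hc, hrest⟩
          have hl₀' : l₀ ∈ P := by
            rcases List.mem_append.1 hl₀ with h | h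
            · exact h
            · simp at h; subst h; rw [hx] at hU; exact absurd hU (by simp)
          refine ⟨l₀, hl₀', hU, ?_, fun l hl hne => hrest l (List.mem_append.2 (Or.inl hl)) hne⟩
          rw [List.countP_append] at hc; simp [hx] at hc; exact hc
      · -- x evals to U
        simp only [hx, and_true, reduceCtorEq, and_false, or_false]
        constructor
        · intro hall
          refine ⟨x, by simp, hx, ?_, ?_⟩
          · rw [List.countP_append]
            have : P.countP (fun l => decide (Lit.eval (A i) l = TV.U)) = 0 := by
              rw [List.countP_eq_zero]
              intro l hl; simp [hall l hl]
            simp [this, hx]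
          · intro l hl hne
            rcases List.mem_append.1 hl with h | h
            · exact hall l h
            · simp at h; subst h; exact absurd hx hne
        · rintro ⟨l₀, hl₀, hU, hc, hrest⟩
          intro l hl
          rw [List.countP_append] at hc
          simp [hx] at hc
          have this := hc l hl
          exact hrest l (List.mem_append.2 (Or.inl hl)) this
end

section
/- The two-level (group) testing procedure is sound and complete: partition assignments into groups, each group having its associated aggregate assignment; if one tests clause C on each individual assignment only within groups whose aggregate tests positive, then the set of individual assignments reported is exactly the set of all assignments on which C triggers. -/
variable {V : Type}

lemma eval_mem_aeval {S : Set (V → TV)} {A : V → TV} (hA : A ∈ S) (l : Lit V) :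
    l.eval A ∈ l.aeval (setAgg S) := by
  cases l with
  | pos v => exact ⟨A, hA, rfl⟩
  | neg v => exact ⟨A v, ⟨A, hA, rfl⟩, rfl⟩

theorem group_testing_sound_complete {V ι : Type} (S : ι → Set (V → TV))
    (C : List (Lit V)) :
    {A : V → TV | ∃ j : ι, A ∈ S j ∧ aggTriggers (setAgg (S j)) C ∧ triggers A C} =
      {A : V → TV | (∃ j : ι, A ∈ S j) ∧ triggers A C} := by
  ext A
  simp only [Set.mem_setOf_eq]
  constructor
  · rintro ⟨j, hA, _, ht⟩; exact ⟨⟨j, hA⟩, ht⟩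
  · rintro ⟨⟨j, hA⟩, ht⟩
    refine ⟨j, hA, ⟨?_, ?_⟩, ht⟩
    · intro l hl
      have := eval_mem_aeval hA l
      cases h : l.eval A with
      | T => exact absurd h (ht.1 l hl)
      | F => left; rw [h] at this; exact this
      | U => right; rw [h] at this; exact this
    · refine le_trans ht.2 (List.countP_mono_left ?_)
      intro l _ h
      simp only [decide_eq_true_eq] at h ⊢
      have := eval_mem_aeval hA l
      rwa [h] at this
end
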